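/- Let Δ be a complete nonsingular fan in ℤⁿ satisfying: every primitive relation has right-hand side 0 or a ray generator, and every ray generator appears on the right-hand side of at most one primitive relation. Let X → X' be the blow-down corresponding to the primitive relation ρ₁+⋯+ρ_k = ρ̂ (so the fan Δ' of X' has the same rays except ρ̂, and contains the cone ⟨ρ₁,…,ρ_k⟩). Then the primitive sets of Δ' are precisely: (a) the primitive sets of Δ not containing the divisor D̂ of ρ̂, other than {D₁,…,D_k}; and (b) sets of the form (S∖{D̂}) ∪ {D₁,…,D_k} (a disjoint union) for certain primitive sets S of Δ containing D̂; and for sets of type (b), the primitive relation of S' in Δ' has the same right-hand side as the primitive relation of S in Δ. Consequently Δ' also satisfies both hypotheses. -/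

import Mathlib

/-- A complete nonsingular (simplicial) fan in ℤⁿ, described combinatorially:
cones are recorded by their (finite) sets of primitive ray generators. -/
structure CompleteNonsingFan (n : ℕ) where
  rays : Finset (Fin n → ℤ)
  cones : Finset (Finset (Fin n → ℤ))
  empty_mem : ∅ ∈ cones
  singleton_mem : ∀ ρ ∈ rays, {ρ} ∈ cones
  cone_rays : ∀ σ ∈ cones, σ ⊆ rays
  face_mem : ∀ σ ∈ cones, ∀ τ ⊆ σ, τ ∈ cones
  /-- nonsingularity: the generators of every cone form part of a ℤ-basis of ℤⁿ -/
  nonsingular : ∀ σ ∈ cones, ∃ b : Module.Basis (Fin n) ℤ (Fin n → ℤ),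
      (σ : Set (Fin n → ℤ)) ⊆ Set.range ⇑b
  /-- completeness: every point of ℝⁿ lies in some cone -/
  complete : ∀ x : Fin n → ℝ, ∃ σ ∈ cones, ∃ c : (Fin n → ℤ) → ℝ,
      (∀ v, 0 ≤ c v) ∧ x = ∑ v ∈ σ, c v • (fun i => (v i : ℝ))

/-- A primitive set: a set of rays not spanning a cone, every proper subset of
which spans a cone. -/
def IsPrimitiveSet {n : ℕ} (F : CompleteNonsingFan n) (P : Finset (Fin n → ℤ)) : Prop :=
  P ⊆ F.rays ∧ P ∉ F.cones ∧ ∀ ρ ∈ P, P.erase ρ ∈ F.cones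

lemma sum_ne_zero_of_subset_basis {n : ℕ} (b : Module.Basis (Fin n) ℤ (Fin n → ℤ))
    (s : Finset (Fin n → ℤ)) (hs : (s : Set (Fin n → ℤ)) ⊆ Set.range ⇑b)
    (hne : s.Nonempty) : ∑ v ∈ s, v ≠ 0 := by
  intro h
  obtain ⟨w, hw⟩ := hne
  obtain ⟨i₀, hi₀⟩ := hs hw
  have hrepr : ∑ v ∈ s, b.repr v = 0 := by
    rw [← map_sum, h, map_zero]
  have happ : ∑ v ∈ s, (b.repr v) i₀ = 0 := by
    have := congrArg (fun f => f i₀) hrepr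
    simpa [Finsupp.finset_sum_apply] using this
  have hnn : ∀ v ∈ s, 0 ≤ (b.repr v) i₀ := by
    intro v hv
    obtain ⟨j, hj⟩ := hs hv
    rw [← hj, b.repr_self, Finsupp.single_apply]
    split <;> norm_num
  have := (Finset.sum_eq_zero_iff_of_nonneg hnn).mp happ w hw
  rw [← hi₀, b.repr_self, Finsupp.single_apply] at this
  simp at this

/-- Sato's description of primitive sets under blow-down, used in
Proposition 3.9: let Δ satisfy: every primitive relation has right-hand side 0 or
a ray generator, each ray generator on the right of at most one primitive relation.
Let X → X' be the blow-down for the primitive relation Σ_{v∈P₀} v = ρ̂, with Δ'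
having rays Δ.rays ∖ {ρ̂} and cones as described. Then: (a)-type sets are primitive
for Δ'; every primitive set of Δ' is of type (a) or type (b) = (S∖{ρ̂}) ⊔ P₀ with
the same right-hand side; and Δ' again satisfies both hypotheses. -/
theorem stmt_18 (n : ℕ) (F F' : CompleteNonsingFan n)
    (hprim : ∀ P, IsPrimitiveSet F P → (∑ v ∈ P, v = 0 ∨ ∑ v ∈ P, v ∈ F.rays))
    (huniq : ∀ P Q, IsPrimitiveSet F P → IsPrimitiveSet F Q →
        ∑ v ∈ P, v ∈ F.rays → ∑ v ∈ P, v = ∑ v ∈ Q, v → P = Q)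
    (P₀ : Finset (Fin n → ℤ)) (ρh : Fin n → ℤ)
    (hP₀ : IsPrimitiveSet F P₀) (hρh : ρh ∈ F.rays) (hrelP₀ : ∑ v ∈ P₀, v = ρh)
    (hrays' : F'.rays = F.rays.erase ρh)
    (hcones' : ∀ σ : Finset (Fin n → ℤ), σ ∈ F'.cones ↔
        ((σ ∈ F.cones ∧ ρh ∉ σ) ∨ ∃ τ ∈ F.cones, ρh ∈ τ ∧ σ = (τ.erase ρh) ∪ P₀)) :
    (∀ Q, IsPrimitiveSet F Q → ρh ∉ Q → Q ≠ P₀ → IsPrimitiveSet F' Q) ∧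
    (∀ Q, IsPrimitiveSet F' Q →
        (IsPrimitiveSet F Q ∧ ρh ∉ Q ∧ Q ≠ P₀) ∨
        (∃ S, IsPrimitiveSet F S ∧ ρh ∈ S ∧ Disjoint (S.erase ρh) P₀ ∧
          Q = (S.erase ρh) ∪ P₀ ∧ ∑ v ∈ Q, v = ∑ v ∈ S, v)) ∧
    (∀ P, IsPrimitiveSet F' P → (∑ v ∈ P, v = 0 ∨ ∑ v ∈ P, v ∈ F'.rays)) ∧
    (∀ P Q, IsPrimitiveSet F' P → IsPrimitiveSet F' Q →
        ∑ v ∈ P, v ∈ F'.rays → ∑ v ∈ P, v = ∑ v ∈ Q, v → P = Q) := by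
  -- ρh is not a member of P₀
  have hρP₀ : ρh ∉ P₀ := by
    intro hmem
    have hσ : P₀.erase ρh ∈ F.cones := hP₀.2.2 ρh hmem
    have hsum0 : ∑ v ∈ P₀.erase ρh, v = 0 := by
      have h1 := Finset.sum_erase_add P₀ (fun v => v) hmem
      have h2 : ∑ v ∈ P₀.erase ρh, v + ρh = 0 + ρh := by
        rw [h1, hrelP₀, zero_add]
      exact add_right_cancel h2
    by_cases hempty : P₀.erase ρh = ∅
    · rcases (Finset.erase_eq_empty_iff P₀ ρh).mp hempty with h | h
      · exact absurd hmem (h ▸ Finset.notMem_empty ρh)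
      · exact hP₀.2.1 (h ▸ F.singleton_mem ρh hρh)
    · obtain ⟨b, hb⟩ := F.nonsingular _ hσ
      exact sum_ne_zero_of_subset_basis b _ hb (Finset.nonempty_iff_ne_empty.mpr hempty) hsum0
  -- P₀ is nonempty
  have hP₀ne : P₀.Nonempty := by
    rcases P₀.eq_empty_or_nonempty with h | h
    · exact absurd (h ▸ F.empty_mem) hP₀.2.1
    · exact h
  -- any proper subset of a primitive set is a cone
  have hface : ∀ Q, IsPrimitiveSet F Q → ∀ τ, τ ⊆ Q → τ ≠ Q → τ ∈ F.cones := by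
    intro Q hQ τ hsub hne
    obtain ⟨x, hxQ, hxτ⟩ := Finset.exists_of_ssubset (lt_of_le_of_ne hsub hne)
    exact F.face_mem _ (hQ.2.2 x hxQ) τ (fun y hy => Finset.mem_erase.mpr
      ⟨fun h => hxτ (h ▸ hy), hsub hy⟩)
  -- Part 1: type (a) sets are primitive for F'
  have part1 : ∀ Q, IsPrimitiveSet F Q → ρh ∉ Q → Q ≠ P₀ → IsPrimitiveSet F' Q := by
    intro Q hQ hρQ hQP₀
    refine ⟨?_, ?_, ?_⟩
    · intro x hx
      rw [hrays']
      exact Finset.mem_erase.mpr ⟨fun h => hρQ (h ▸ hx), hQ.1 hx⟩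
    · intro hc
      rcases (hcones' Q).mp hc with ⟨h1, _⟩ | ⟨τ, hτ, hρτ, hQeq⟩
      · exact hQ.2.1 h1
      · have hP₀Q : P₀ ⊆ Q := hQeq ▸ Finset.subset_union_right
        exact hP₀.2.1 (hface Q hQ P₀ hP₀Q (fun h => hQP₀ h.symm))
    · intro ρ hρ
      exact (hcones' _).mpr (Or.inl ⟨hQ.2.2 ρ hρ,
        fun h => hρQ (Finset.mem_of_mem_erase h)⟩)
  -- Part 2: classification of primitive sets of F'
  have part2 : ∀ Q, IsPrimitiveSet F' Q →
      (IsPrimitiveSet F Q ∧ ρh ∉ Q ∧ Q ≠ P₀) ∨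
      (∃ S, IsPrimitiveSet F S ∧ ρh ∈ S ∧ Disjoint (S.erase ρh) P₀ ∧
        Q = (S.erase ρh) ∪ P₀ ∧ ∑ v ∈ Q, v = ∑ v ∈ S, v) := by
    intro Q hQ
    have hρQ : ρh ∉ Q := by
      intro h
      have := hQ.1 h
      rw [hrays'] at this
      exact (Finset.mem_erase.mp this).1 rfl
    have hQrays : Q ⊆ F.rays := by
      intro x hx
      have := hQ.1 hx
      rw [hrays'] at this
      exact Finset.mem_of_mem_erase this
    by_cases hPQ : P₀ ⊆ Q
    · -- type (b)
      right
      have hρQP : ρh ∉ Q \ P₀ := fun h => hρQ (Finset.mem_sdiff.mp h).1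
      refine ⟨insert ρh (Q \ P₀), ⟨?_, ?_, ?_⟩, Finset.mem_insert_self _ _, ?_, ?_, ?_⟩
      · intro x hx
        rcases Finset.mem_insert.mp hx with h | h
        · exact h ▸ hρh
        · exact hQrays (Finset.mem_sdiff.mp h).1
      · intro hc
        apply hQ.2.1
        apply (hcones' Q).mpr
        refine Or.inr ⟨insert ρh (Q \ P₀), hc, Finset.mem_insert_self _ _, ?_⟩
        rw [Finset.erase_insert hρQP, Finset.sdiff_union_self_eq_union,
          Finset.union_eq_left.mpr hPQ]
      · intro ρ hρ
        rcases Finset.mem_insert.mp hρ with h | h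
        · -- ρ = ρh : need Q \ P₀ ∈ F.cones
          subst h
          rw [Finset.erase_insert hρQP]
          obtain ⟨v₀, hv₀⟩ := hP₀ne
          have h1 : Q \ P₀ ∈ F'.cones := F'.face_mem _ (hQ.2.2 v₀ (hPQ hv₀)) _
            (fun y hy => Finset.mem_erase.mpr
              ⟨fun h => (Finset.mem_sdiff.mp hy).2 (h ▸ hv₀), (Finset.mem_sdiff.mp hy).1⟩)
          rcases (hcones' _).mp h1 with ⟨h2, _⟩ | ⟨τ, _, _, heq⟩
          · exact h2
          · exact absurd (heq ▸ Finset.subset_union_right hv₀ : v₀ ∈ Q \ P₀)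
              (fun h => (Finset.mem_sdiff.mp h).2 hv₀)
        · -- ρ ∈ Q \ P₀
          have hρQ' : ρ ∈ Q := (Finset.mem_sdiff.mp h).1
          have hρP₀' : ρ ∉ P₀ := (Finset.mem_sdiff.mp h).2
          have hρne : ρ ≠ ρh := fun hh => hρQ (hh ▸ hρQ')
          have h1 : Q.erase ρ ∈ F'.cones := hQ.2.2 ρ hρQ'
          rcases (hcones' _).mp h1 with ⟨h2, _⟩ | ⟨τ, hτ, hρτ, heq⟩
          · -- impossible: P₀ ⊆ Q.erase ρ would make P₀ a cone
            exact absurd (F.face_mem _ h2 P₀ (fun y hy => Finset.mem_erase.mpr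
              ⟨fun hh => hρP₀' (hh ▸ hy), hPQ hy⟩)) hP₀.2.1
          · -- (insert ρh (Q \ P₀)).erase ρ ⊆ τ
            apply F.face_mem τ hτ
            intro x hx
            have hx' : x ∈ insert ρh (Q \ P₀) := Finset.mem_of_mem_erase hx
            have hxρ : x ≠ ρ := (Finset.mem_erase.mp hx).1
            rcases Finset.mem_insert.mp hx' with hxh | hxh
            · exact hxh ▸ hρτ
            · have hxQ : x ∈ Q.erase ρ := Finset.mem_erase.mpr
                ⟨hxρ, (Finset.mem_sdiff.mp hxh).1⟩
              rw [heq] at hxQ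
              rcases Finset.mem_union.mp hxQ with hh | hh
              · exact Finset.mem_of_mem_erase hh
              · exact absurd hh (Finset.mem_sdiff.mp hxh).2
      · rw [Finset.erase_insert hρQP]
        exact Finset.sdiff_disjoint
      · rw [Finset.erase_insert hρQP, Finset.sdiff_union_self_eq_union,
          Finset.union_eq_left.mpr hPQ]
      · rw [Finset.sum_insert hρQP, ← hrelP₀, ← Finset.sum_sdiff hPQ]
        ring
    · -- type (a)
      left
      refine ⟨⟨hQrays, ?_, ?_⟩, hρQ, fun h => hPQ (h ▸ Finset.Subset.refl P₀)⟩
      · intro hc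
        exact hQ.2.1 ((hcones' Q).mpr (Or.inl ⟨hc, hρQ⟩))
      · intro ρ hρ
        rcases (hcones' _).mp (hQ.2.2 ρ hρ) with ⟨h2, _⟩ | ⟨τ, _, _, heq⟩
        · exact h2
        · exact absurd (fun y hy => Finset.mem_of_mem_erase
            (heq ▸ Finset.subset_union_right hy : y ∈ Q.erase ρ)) hPQ
  -- sums of F-primitive sets ≠ ρh unless the set is P₀
  have hsumne : ∀ S, IsPrimitiveSet F S → S ≠ P₀ → ∑ v ∈ S, v ≠ ρh := by
    intro S hS hne hsum
    exact hne (huniq S P₀ hS hP₀ (hsum ▸ hρh) (hsum.trans hrelP₀.symm))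
  -- Part 3
  have part3 : ∀ P, IsPrimitiveSet F' P → (∑ v ∈ P, v = 0 ∨ ∑ v ∈ P, v ∈ F'.rays) := by
    intro P hP
    rcases part2 P hP with ⟨hPF, hρP, hPne⟩ | ⟨S, hS, hρS, _, _, hsum⟩
    · rcases hprim P hPF with h | h
      · exact Or.inl h
      · exact Or.inr (hrays' ▸ Finset.mem_erase.mpr ⟨hsumne P hPF hPne, h⟩)
    · have hSne : S ≠ P₀ := fun h => hρP₀ (h ▸ hρS)
      rcases hprim S hS with h | h
      · exact Or.inl (hsum.trans h)
      · exact Or.inr (hrays' ▸ Finset.mem_erase.mpr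
          ⟨hsum ▸ hsumne S hS hSne, hsum ▸ h⟩)
  -- Part 4
  have part4 : ∀ P Q, IsPrimitiveSet F' P → IsPrimitiveSet F' Q →
      ∑ v ∈ P, v ∈ F'.rays → ∑ v ∈ P, v = ∑ v ∈ Q, v → P = Q := by
    intro P Q hP hQ hsumP hsumPQ
    have hsumPF : ∑ v ∈ P, v ∈ F.rays := by
      rw [hrays'] at hsumP
      exact Finset.mem_of_mem_erase hsumP
    rcases part2 P hP with ⟨hPF, hρP, _⟩ | ⟨S, hS, hρS, _, hPeq, hsumS⟩ <;>
      rcases part2 Q hQ with ⟨hQF, hρQ, _⟩ | ⟨T, hT, hρT, _, hQeq, hsumT⟩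
    · exact huniq P Q hPF hQF hsumPF hsumPQ
    · have := huniq P T hPF hT hsumPF (hsumPQ.trans hsumT)
      exact absurd (this ▸ hρT) hρP
    · have := huniq S Q hS hQF (hsumS ▸ hsumPF) (hsumS.symm.trans hsumPQ)
      exact absurd (this ▸ hρS) hρQ
    · have hST := huniq S T hS hT (hsumS ▸ hsumPF)
        (hsumS.symm.trans (hsumPQ.trans hsumT))
      rw [hPeq, hQeq, hST]
  exact ⟨part1, part2, part3, part4⟩
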